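/- Let B be a positive definite 2×2 Hermitian matrix, Λ a Hermitian 2×2 matrix, and set M = iB². Then M − Λ is invertible and the matrix 1 + T, with T := −2iB(M − Λ)⁻¹B, is unitary. -/

import Mathlib

open Complex Matrix
open scoped ComplexOrder

/-- Let `B` be positive definite Hermitian, `Λ` Hermitian, and
`M = iB²`. Then `M - Λ` is invertible, and `1 + T` with `T = -2iB(M - Λ)⁻¹B`
is unitary. -/
theorem stmt8 (B Λ : Matrix (Fin 2) (Fin 2) ℂ)
    (hB : B.PosDef) (hΛ : Λ.IsHermitian)
    (M : Matrix (Fin 2) (Fin 2) ℂ) (hM : M = I • (B * B))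
    (T : Matrix (Fin 2) (Fin 2) ℂ)
    (hT : T = (-2 * I) • (B * (M - Λ)⁻¹ * B)) :
    IsUnit (M - Λ) ∧
    (1 + T) * (1 + T)ᴴ = 1 ∧ (1 + T)ᴴ * (1 + T) = 1 := by
  have hBH : Bᴴ = B := hB.isHermitian
  -- invertibility
  have hdet : (M - Λ).det ≠ 0 := by
    intro h
    obtain ⟨v, hv, hveq⟩ := (Matrix.exists_mulVec_eq_zero_iff).2 h
    have hdot : star v ⬝ᵥ (M - Λ) *ᵥ v = 0 := by rw [hveq, dotProduct_zero]
    set r : ℂ := star v ⬝ᵥ (B * B) *ᵥ v with hr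
    set s : ℂ := star v ⬝ᵥ Λ *ᵥ v with hs
    have hrw : I * r - s = 0 := by
      rw [hM] at hdot
      rw [hr, hs]
      rw [← hdot, Matrix.sub_mulVec, dotProduct_sub, Matrix.smul_mulVec,
        dotProduct_smul, smul_eq_mul]
    -- r = star (B *ᵥ v) ⬝ᵥ (B *ᵥ v)
    have hr2 : r = star (B *ᵥ v) ⬝ᵥ (B *ᵥ v) := by
      rw [hr, Matrix.star_mulVec, hBH, ← Matrix.dotProduct_mulVec, ← Matrix.mulVec_mulVec]
    have hrim : r.im = 0 := by
      rw [hr2]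
      have : (starRingEnd ℂ) (star (B *ᵥ v) ⬝ᵥ (B *ᵥ v)) = star (B *ᵥ v) ⬝ᵥ (B *ᵥ v) := by
        simp [dotProduct, Finset.sum_comm, map_sum, mul_comm]
      exact Complex.conj_eq_iff_im.mp this
    have hsim : s.im = 0 := by
      have : (starRingEnd ℂ) s = s := by
        rw [hs]
        calc (starRingEnd ℂ) (star v ⬝ᵥ Λ *ᵥ v)
            = star (star v ⬝ᵥ Λ *ᵥ v) := rfl
          _ = star (Λ *ᵥ v) ⬝ᵥ v := by rw [star_dotProduct, star_star]
          _ = star v ⬝ᵥ Λ *ᵥ v := by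
              rw [Matrix.star_mulVec, hΛ.eq, ← Matrix.dotProduct_mulVec]
      exact Complex.conj_eq_iff_im.mp this
    have hre : r.re = 0 := by
      have := congrArg Complex.im hrw
      simpa [Complex.sub_im, Complex.mul_im, hrim, hsim] using this
    have hr0 : r = 0 := Complex.ext hre hrim
    have hBv : B *ᵥ v = 0 := by
      rw [hr2] at hr0
      exact dotProduct_star_self_eq_zero.mp hr0
    have hpos := hB.dotProduct_mulVec_pos hv
    rw [hBv, dotProduct_zero] at hpos
    exact lt_irrefl 0 hpos
  have hU : IsUnit (M - Λ) := (Matrix.isUnit_iff_isUnit_det _).2 (isUnit_iff_ne_zero.2 hdet)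
  set A := M - Λ with hA
  have hdA : IsUnit A.det := isUnit_iff_ne_zero.2 hdet
  have hinv1 : A * A⁻¹ = 1 := Matrix.mul_nonsing_inv A hdA
  have hinv2 : A⁻¹ * A = 1 := Matrix.nonsing_inv_mul A hdA
  have hdAH : IsUnit Aᴴ.det := by rw [Matrix.det_conjTranspose]; exact hdA.star
  have hinv3 : Aᴴ * (Aᴴ)⁻¹ = 1 := Matrix.mul_nonsing_inv _ hdAH
  have hinv4 : (Aᴴ)⁻¹ * Aᴴ = 1 := Matrix.nonsing_inv_mul _ hdAH
  have hAH : Aᴴ = (-I) • (B * B) - Λ := by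
    rw [hA, Matrix.conjTranspose_sub, hΛ.eq, hM, Matrix.conjTranspose_smul]
    simp [Matrix.conjTranspose_mul, hBH, Complex.star_def, Complex.conj_I]
  have hTH : Tᴴ = (2 * I) • (B * (Aᴴ)⁻¹ * B) := by
    rw [hT, Matrix.conjTranspose_smul, Matrix.conjTranspose_mul, Matrix.conjTranspose_mul,
      hBH, Matrix.conjTranspose_nonsing_inv]
    rw [show star (-2 * I : ℂ) = 2 * I by simp [Complex.ext_iff]]
    rw [Matrix.mul_assoc]
  have hkey : (-2*I) • Aᴴ + (2*I) • A + (4:ℂ) • (B*B) = 0 := by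
    rw [hAH, hA, hM, smul_sub, smul_sub, smul_smul, smul_smul]
    rw [show (-2*I)*(-I) = (-2 : ℂ) by linear_combination (2:ℂ) * Complex.I_mul_I,
        show (2*I)*I = (-2 : ℂ) by linear_combination (2:ℂ) * Complex.I_mul_I]
    module
  have e1 : T = B * A⁻¹ * ((-2*I) • Aᴴ) * (Aᴴ)⁻¹ * B := by
    rw [hT]
    simp only [Matrix.mul_smul, Matrix.smul_mul, Matrix.mul_assoc]
    rw [← Matrix.mul_assoc Aᴴ, hinv3, one_mul]
  have e2 : Tᴴ = B * A⁻¹ * ((2*I) • A) * (Aᴴ)⁻¹ * B := by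
    rw [hTH]
    simp only [Matrix.mul_smul, Matrix.smul_mul, Matrix.mul_assoc]
    rw [← Matrix.mul_assoc A⁻¹ A, hinv2, one_mul]
  have e3 : T * Tᴴ = B * A⁻¹ * ((4:ℂ) • (B*B)) * (Aᴴ)⁻¹ * B := by
    rw [hTH, hT]
    simp only [Matrix.mul_smul, Matrix.smul_mul, Matrix.mul_assoc, smul_smul]
    rw [show (2*I)*(-2*I) = (4 : ℂ) by linear_combination (-4:ℂ) * Complex.I_mul_I]
  have hsum : T + Tᴴ + T * Tᴴ = 0 := by
    rw [e3, e2, e1, ← Matrix.add_mul, ← Matrix.add_mul, ← Matrix.add_mul, ← Matrix.add_mul,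
      ← Matrix.mul_add, ← Matrix.mul_add, hkey]
    simp
  have f1 : T = B * (Aᴴ)⁻¹ * ((-2*I) • Aᴴ) * A⁻¹ * B := by
    rw [hT]
    simp only [Matrix.mul_smul, Matrix.smul_mul, Matrix.mul_assoc]
    rw [← Matrix.mul_assoc ((Aᴴ)⁻¹) Aᴴ, hinv4, one_mul]
  have f2 : Tᴴ = B * (Aᴴ)⁻¹ * ((2*I) • A) * A⁻¹ * B := by
    rw [hTH]
    simp only [Matrix.mul_smul, Matrix.smul_mul, Matrix.mul_assoc]
    rw [← Matrix.mul_assoc A, hinv1, one_mul]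
  have f3 : Tᴴ * T = B * (Aᴴ)⁻¹ * ((4:ℂ) • (B*B)) * A⁻¹ * B := by
    rw [hTH, hT]
    simp only [Matrix.mul_smul, Matrix.smul_mul, Matrix.mul_assoc, smul_smul]
    rw [show (-2*I)*(2*I) = (4 : ℂ) by linear_combination (-4:ℂ) * Complex.I_mul_I]
  have hsum2 : T + Tᴴ + Tᴴ * T = 0 := by
    rw [f3, f2, f1, ← Matrix.add_mul, ← Matrix.add_mul, ← Matrix.add_mul, ← Matrix.add_mul,
      ← Matrix.mul_add, ← Matrix.mul_add, hkey]
    simp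
  refine ⟨hU, ?_, ?_⟩
  · rw [Matrix.conjTranspose_add, Matrix.conjTranspose_one]
    calc (1 + T) * (1 + Tᴴ) = 1 + (T + Tᴴ + T * Tᴴ) := by noncomm_ring
      _ = 1 := by rw [hsum, add_zero]
  · rw [Matrix.conjTranspose_add, Matrix.conjTranspose_one]
    calc (1 + Tᴴ) * (1 + T) = 1 + (T + Tᴴ + Tᴴ * T) := by noncomm_ring
      _ = 1 := by rw [hsum2, add_zero]
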